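/- For the Neumann Green's function G_ℍ of the upper half-plane and the Möbius map φ(z) = (z-i)/(z+i) from ℍ to the unit disk 𝔻, one has G_𝔻(φ(z), y) = G_ℍ(z, φ⁻¹(y)) + 2 log|z+i| - 2 log|y-1| for all z ∈ ℍ and y ∈ 𝔻 with y ≠ 1 and φ(z) ≠ y. -/

import Mathlib

open Complex

/-- Relation between the Neumann Green's functions of the upper half-plane and of the
unit disk under the Möbius map `φ(z) = (z-i)/(z+i)`, with inverse `φ⁻¹(w) = i(1+w)/(1-w)`:
`G_𝔻(φ(z), y) = G_ℍ(z, φ⁻¹(y)) + 2 log|z+i| - 2 log|y-1|`. -/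
theorem green_disk_halfplane_relation (z y : ℂ) (hz : 0 < z.im) (hy : ‖y‖ < 1)
    (hy1 : y ≠ 1) (hne : (z - I) / (z + I) ≠ y) :
    -Real.log (‖(z - I) / (z + I) - y‖ *
        ‖1 - (z - I) / (z + I) * (starRingEnd ℂ) y‖) =
      -Real.log (‖z - I * (1 + y) / (1 - y)‖ *
          ‖z - (starRingEnd ℂ) (I * (1 + y) / (1 - y))‖)
        + 2 * Real.log ‖z + I‖ - 2 * Real.log ‖y - 1‖ := by
  have h1y : (1:ℂ) - y ≠ 0 := sub_ne_zero.mpr (Ne.symm hy1)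
  have h1y' : (1:ℂ) - (starRingEnd ℂ) y ≠ 0 := by
    intro h
    apply h1y
    have := congrArg (starRingEnd ℂ) h
    simpa using this
  have hzI : z + I ≠ 0 := by
    intro h
    have := congrArg Complex.im h
    simp at this
    linarith
  set w : ℂ := I * (1 + y) / (1 - y) with hw
  have hwc : (starRingEnd ℂ) w = -(I * (1 + (starRingEnd ℂ) y) / (1 - (starRingEnd ℂ) y)) := by
    rw [hw]
    rw [map_div₀, map_mul, map_add, map_sub, map_one, Complex.conj_I]
    ring
  have f1 : (z - I) / (z + I) - y = (1 - y) * (z - w) / (z + I) := by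
    rw [hw]; field_simp; ring
  have f2 : 1 - (z - I) / (z + I) * (starRingEnd ℂ) y
      = (1 - (starRingEnd ℂ) y) * (z - (starRingEnd ℂ) w) / (z + I) := by
    rw [hwc]; field_simp; ring
  -- |φ(z)| < 1
  have habsφ : ‖(z - I) / (z + I)‖ < 1 := by
    rw [norm_div, div_lt_one (norm_pos_iff.mpr hzI)]
    have h2 : ‖z - I‖ ^ 2 < ‖z + I‖ ^ 2 := by
      rw [Complex.sq_norm, Complex.sq_norm, Complex.normSq_apply, Complex.normSq_apply]
      simp
      nlinarith
    exact lt_of_pow_lt_pow_left₀ 2 (norm_nonneg _) h2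
  have hden : 1 - (z - I) / (z + I) * (starRingEnd ℂ) y ≠ 0 := by
    intro h
    have h' : (z - I) / (z + I) * (starRingEnd ℂ) y = 1 := by
      have := sub_eq_zero.mp h; exact this.symm
    have habs : ‖(z - I) / (z + I) * (starRingEnd ℂ) y‖ = 1 := by
      rw [h']; simp
    rw [norm_mul, Complex.norm_conj] at habs
    nlinarith [norm_nonneg ((z - I) / (z + I)), norm_nonneg y]
  have hzw : z - w ≠ 0 := by
    intro h
    apply hne
    have : (z - I) / (z + I) - y = 0 := by rw [f1, h]; ring
    exact sub_eq_zero.mp this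
  have hzwc : z - (starRingEnd ℂ) w ≠ 0 := by
    intro h
    apply hden
    rw [f2, h]; ring
  -- abbreviations
  have hd : 0 < ‖y - 1‖ := norm_pos_iff.mpr (sub_ne_zero.mpr hy1)
  have ha : 0 < ‖z - w‖ := norm_pos_iff.mpr hzw
  have hb : 0 < ‖z - (starRingEnd ℂ) w‖ := norm_pos_iff.mpr hzwc
  have hc : 0 < ‖z + I‖ := norm_pos_iff.mpr hzI
  have e1 : ‖(z - I) / (z + I) - y‖
      = ‖y - 1‖ * ‖z - w‖ / ‖z + I‖ := by
    rw [f1, norm_div, norm_mul]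
    congr 2
    rw [show (1:ℂ) - y = -(y - 1) by ring, norm_neg]
  have e2 : ‖1 - (z - I) / (z + I) * (starRingEnd ℂ) y‖
      = ‖y - 1‖ * ‖z - (starRingEnd ℂ) w‖ / ‖z + I‖ := by
    rw [f2, norm_div, norm_mul]
    congr 2
    rw [show (1:ℂ) - (starRingEnd ℂ) y = (starRingEnd ℂ) (-(y-1)) by simp,
      Complex.norm_conj, norm_neg]
  rw [e1, e2]
  set a := ‖z - w‖
  set b := ‖z - (starRingEnd ℂ) w‖
  set c := ‖z + I‖
  set d := ‖y - 1‖
  have hprod : d * a / c * (d * b / c) = a * b * d ^ 2 / c ^ 2 := by ring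
  rw [hprod, Real.log_div (by positivity) (by positivity),
    Real.log_mul (by positivity) (by positivity),
    Real.log_mul (by positivity) (by positivity),
    Real.log_pow, Real.log_pow]
  push_cast
  ring
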